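/- arXiv:1305.2890 — 2 statements merged into one kernel-verified Lean document; each statement's English description precedes it below -/
import Mathlib

section
/- Let K be a nonempty, L⁰-convex, sequentially closed and bounded subset of (L⁰)^d. Suppose X₁, X₂ ∈ (L⁰)^d and Y₁, Y₂ ∈ K satisfy ⟨X₁ − Y₁, Z − Y₁⟩ ≤ 0 and ⟨X₂ − Y₂, Z − Y₂⟩ ≤ 0 P-almost surely for every Z ∈ K (i.e., Y₁ and Y₂ are the projections of X₁ and X₂ onto K). Then ‖Y₁ − Y₂‖ ≤ ‖X₁ − X₂‖ P-almost surely. -/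
open MeasureTheory Filter

noncomputable section

variable {Ω : Type*} [MeasurableSpace Ω]

/-- `L⁰(Ω,𝒜,P)`: equivalence classes of real-valued measurable functions modulo
`P`-almost-sure equality. -/
abbrev L0 (P : Measure Ω) : Type _ := Ω →ₘ[P] ℝ

namespace L0

variable (P : Measure Ω)

/-- The indicator `1_A` of a measurable set as an element of `L⁰`. -/
def ind (A : Set Ω) : L0 P :=
  letI := Classical.dec (MeasurableSet A)
  if h : MeasurableSet A then
    AEEqFun.mk (A.indicator fun _ => (1 : ℝ)) (aestronglyMeasurable_const.indicator h)
  else 0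

/-- A partition: a countable family of measurable sets, pairwise disjoint up to null
sets, covering `Ω` up to a null set. -/
structure IsPartition (A : ℕ → Set Ω) : Prop where
  meas : ∀ i, MeasurableSet (A i)
  disj : ∀ i j, i ≠ j → P (A i ∩ A j) = 0
  full : P (⋃ i, A i) = 1

/-- `Z = Σᵢ 1_{Aᵢ} Xᵢ` in `L⁰`: `Z` agrees with `Xᵢ` on `Aᵢ`, i.e. `1_{Aᵢ}·Z = 1_{Aᵢ}·Xᵢ`. -/
def IsGluing1 (A : ℕ → Set Ω) (X : ℕ → L0 P) (Z : L0 P) : Prop :=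
  ∀ i, ind P (A i) * Z = ind P (A i) * X i

/-- `Z = Σᵢ 1_{Aᵢ} Xᵢ` in `(L⁰)^d`. -/
def IsGluing {d : ℕ} (A : ℕ → Set Ω) (X : ℕ → Fin d → L0 P) (Z : Fin d → L0 P) : Prop :=
  ∀ k, IsGluing1 P A (fun i => X i k) (Z k)

/-- The σ-stable hull `σ(𝒞)` of a set `𝒞 ⊆ (L⁰)^d`. -/
def sigmaHull {d : ℕ} (C : Set (Fin d → L0 P)) : Set (Fin d → L0 P) :=
  {Z | ∃ (A : ℕ → Set Ω) (X : ℕ → Fin d → L0 P),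
    IsPartition P A ∧ (∀ i, X i ∈ C) ∧ IsGluing P A X Z}

/-- A function `f` defined (at least) on a σ-stable set `C ⊆ (L⁰)^d` is local if
`f(Σᵢ 1_{Aᵢ} Xᵢ) = Σᵢ 1_{Aᵢ} f(Xᵢ)` for every partition `(Aᵢ)` and family `(Xᵢ)` in `C`. -/
def IsLocal {d e : ℕ} (C : Set (Fin d → L0 P)) (f : (Fin d → L0 P) → (Fin e → L0 P)) : Prop :=
  ∀ (A : ℕ → Set Ω) (X : ℕ → Fin d → L0 P) (Z : Fin d → L0 P),
    IsPartition P A → (∀ i, X i ∈ C) → Z ∈ C → IsGluing P A X Z →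
    IsGluing P A (fun i => f (X i)) (f Z)

/-- Locality for functions with values in `L⁰`. -/
def IsLocalScalar {d : ℕ} (C : Set (Fin d → L0 P)) (f : (Fin d → L0 P) → L0 P) : Prop :=
  ∀ (A : ℕ → Set Ω) (X : ℕ → Fin d → L0 P) (Z : Fin d → L0 P),
    IsPartition P A → (∀ i, X i ∈ C) → Z ∈ C → IsGluing P A X Z →
    IsGluing1 P A (fun i => f (X i)) (f Z)

/-- Locality for functions from `L⁰` to `L⁰`. -/
def IsLocal1 (C : Set (L0 P)) (f : L0 P → L0 P) : Prop :=
  ∀ (A : ℕ → Set Ω) (X : ℕ → L0 P) (Z : L0 P),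
    IsPartition P A → (∀ i, X i ∈ C) → Z ∈ C → IsGluing1 P A X Z →
    IsGluing1 P A (fun i => f (X i)) (f Z)

/-- `P`-almost sure convergence of a sequence in `L⁰`. -/
def TendstoAS (X : ℕ → L0 P) (Y : L0 P) : Prop :=
  ∀ᵐ ω ∂P, Tendsto (fun n => X n ω) atTop (nhds (Y ω))

/-- `P`-almost sure convergence of a sequence in `(L⁰)^d`. -/
def TendstoASd {d : ℕ} (X : ℕ → Fin d → L0 P) (Y : Fin d → L0 P) : Prop :=
  ∀ k, TendstoAS P (fun n => X n k) (Y k)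

/-- Sequential continuity (w.r.t. `P`-a.s. convergence) of `f` on `C ⊆ (L⁰)^d`. -/
def SeqContinuous {d e : ℕ} (C : Set (Fin d → L0 P)) (f : (Fin d → L0 P) → (Fin e → L0 P)) :
    Prop :=
  ∀ (X : ℕ → Fin d → L0 P) (Y : Fin d → L0 P), (∀ n, X n ∈ C) → Y ∈ C →
    TendstoASd P X Y → TendstoASd P (fun n => f (X n)) (f Y)

/-- Sequential continuity for functions from `L⁰` to `L⁰`. -/
def SeqContinuous1 (C : Set (L0 P)) (f : L0 P → L0 P) : Prop :=
  ∀ (X : ℕ → L0 P) (Y : L0 P), (∀ n, X n ∈ C) → Y ∈ C →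
    TendstoAS P X Y → TendstoAS P (fun n => f (X n)) (f Y)

/-- The `L⁰`-convex hull `conv(X₁,…,X_N)` of a finite family in `(L⁰)^d`. -/
def conv {d : ℕ} {ι : Type*} [Fintype ι] (X : ι → Fin d → L0 P) : Set (Fin d → L0 P) :=
  {Y | ∃ lam : ι → L0 P, (∀ i, 0 ≤ lam i) ∧ (∑ i, lam i) = 1 ∧ Y = ∑ i, lam i • X i}

/-- The affine hull `aff(X₁,…,X_N)` of a finite family in `(L⁰)^d`. -/
def aff {d : ℕ} {ι : Type*} [Fintype ι] (X : ι → Fin d → L0 P) : Set (Fin d → L0 P) :=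
  {Y | ∃ lam : ι → L0 P, (∑ i, lam i) = 1 ∧ Y = ∑ i, lam i • X i}

/-- Affine independence of `X₁,…,X_N` in `(L⁰)^d`: either `N = 1`, or `N > 1` and
`Σᵢ₌₁^{N−1} λᵢ (Xᵢ − X_N) = 0` implies `λ₁ = ⋯ = λ_{N−1} = 0`. -/
def AffInd {d : ℕ} : {N : ℕ} → (X : Fin N → Fin d → L0 P) → Prop
  | 0, _ => False
  | 1, _ => True
  | (m + 2), X => ∀ lam : Fin (m + 1) → L0 P,
      (∑ i : Fin (m + 1), lam i • (X i.castSucc - X (Fin.last (m + 1)))) = 0 → ∀ i, lam i = 0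

/-- The `L⁰`-scalar product on `(L⁰)^d`. -/
def inner {d : ℕ} (X Y : Fin d → L0 P) : L0 P := ∑ k, X k * Y k

/-- The `L⁰`-norm on `(L⁰)^d`. -/
def norm {d : ℕ} (X : Fin d → L0 P) : L0 P :=
  AEEqFun.comp Real.sqrt Real.continuous_sqrt (inner P X X)

/-- `D` is the essential supremum (least upper bound in the `P`-a.s. order) of a set
`F ⊆ L⁰`. -/
def IsEssSup (F : Set (L0 P)) (D : L0 P) : Prop :=
  (∀ X ∈ F, X ≤ D) ∧ ∀ D' : L0 P, (∀ X ∈ F, X ≤ D') → D ≤ D'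

/-- `𝒞 ⊆ (L⁰)^d` is bounded if `esssup_{X ∈ 𝒞} ‖X‖` belongs to `L⁰`. -/
def Bounded {d : ℕ} (C : Set (Fin d → L0 P)) : Prop :=
  ∃ b : L0 P, ∀ X ∈ C, norm P X ≤ b

/-- `𝒞 ⊆ (L⁰)^d` is sequentially closed if it contains all `P`-a.s. limits of its
sequences. -/
def SeqClosed {d : ℕ} (C : Set (Fin d → L0 P)) : Prop :=
  ∀ (X : ℕ → Fin d → L0 P) (Y : Fin d → L0 P), (∀ n, X n ∈ C) → TendstoASd P X Y → Y ∈ C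

/-- `L⁰`-convexity of a subset of `(L⁰)^d`. -/
def L0Convex {d : ℕ} (C : Set (Fin d → L0 P)) : Prop :=
  ∀ X ∈ C, ∀ Y ∈ C, ∀ lam : L0 P, 0 ≤ lam → lam ≤ 1 → lam • X + (1 - lam) • Y ∈ C

/-- The vertices `Y_k^π = (1/k) Σᵢ₌₁ᵏ X_{π(i)}` of the member `C_π` of the barycentric
subdivision (0-based: `bary P X π k = (1/(k+1)) Σ_{i ≤ k} X_{π(i)}`). -/
def bary {d N : ℕ} (X : Fin N → Fin d → L0 P) (π : Equiv.Perm (Fin N)) (k : Fin N) :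
    Fin d → L0 P :=
  ((k.1 + 1 : ℝ)⁻¹) • ∑ i ∈ Finset.univ.filter (· ≤ k), X (π i)

end L0

end

section Aux

open MeasureTheory Filter

variable {Ω : Type*} [MeasurableSpace Ω] {P : Measure Ω}

private lemma coeFn_finsum {ι : Type*} (s : Finset ι) (f : ι → L0 P) :
    ⇑(∑ i ∈ s, f i) =ᵐ[P] fun ω => ∑ i ∈ s, f i ω := by
  classical
  induction s using Finset.induction with
  | empty => simp only [Finset.sum_empty]; exact (AEEqFun.coeFn_zero : ⇑(0 : Ω →ₘ[P] ℝ) =ᵐ[P] 0)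
  | @insert a s ha ih =>
    rw [Finset.sum_insert ha]
    filter_upwards [AEEqFun.coeFn_add (f a) (∑ i ∈ s, f i), ih] with ω h1 h2
    simp [Finset.sum_insert ha, h1, h2]

private lemma coeFn_inner {d : ℕ} (A B : Fin d → L0 P) :
    ⇑(L0.inner P A B) =ᵐ[P] fun ω => ∑ k, A k ω * B k ω := by
  refine (coeFn_finsum Finset.univ fun k => A k * B k).trans ?_
  have h : ∀ᵐ ω ∂P, ∀ k : Fin d, (A k * B k) ω = A k ω * B k ω :=
    ae_all_iff.2 fun k => AEEqFun.coeFn_mul _ _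
  filter_upwards [h] with ω h
  simp [h]

private lemma coeFn_inner_sub {d : ℕ} (A B C D : Fin d → L0 P) :
    ⇑(L0.inner P (A - B) (C - D)) =ᵐ[P]
      fun ω => ∑ k, (A k ω - B k ω) * (C k ω - D k ω) := by
  refine (coeFn_inner (A - B) (C - D)).trans ?_
  have h1 : ∀ᵐ ω ∂P, ∀ k : Fin d, (A - B) k ω = A k ω - B k ω :=
    ae_all_iff.2 fun k => AEEqFun.coeFn_sub (A k) (B k)
  have h2 : ∀ᵐ ω ∂P, ∀ k : Fin d, (C - D) k ω = C k ω - D k ω :=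
    ae_all_iff.2 fun k => AEEqFun.coeFn_sub (C k) (D k)
  filter_upwards [h1, h2] with ω h1 h2
  simp only [Pi.sub_apply] at h1 h2 ⊢
  simp [h1, h2]

private lemma coeFn_norm_sub {d : ℕ} (A B : Fin d → L0 P) :
    ⇑(L0.norm P (A - B)) =ᵐ[P]
      fun ω => Real.sqrt (∑ k, (A k ω - B k ω) ^ 2) := by
  refine (AEEqFun.coeFn_comp _ _ _).trans ?_
  filter_upwards [coeFn_inner_sub A B A B] with ω h
  simp only [Function.comp_apply, h]
  congr 1
  exact Finset.sum_congr rfl fun k _ => (sq (A k ω - B k ω)).symm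

private lemma sqrt_step {n : ℕ} (a b : Fin n → ℝ)
    (h : ∑ k, a k ^ 2 ≤ ∑ k, b k * a k) :
    Real.sqrt (∑ k, a k ^ 2) ≤ Real.sqrt (∑ k, b k ^ 2) := by
  have hcs := Real.sum_mul_le_sqrt_mul_sqrt Finset.univ b a
  set s := Real.sqrt (∑ k, a k ^ 2) with hs
  set t := Real.sqrt (∑ k, b k ^ 2) with ht
  have hsnn : (0 : ℝ) ≤ s := Real.sqrt_nonneg _
  have hss : s * s = ∑ k, a k ^ 2 :=
    Real.mul_self_sqrt (Finset.sum_nonneg fun k _ => sq_nonneg _)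
  have key : s * s ≤ t * s := by rw [hss]; exact h.trans hcs
  rcases hsnn.eq_or_lt with h0 | h0
  · rw [← h0]; exact Real.sqrt_nonneg _
  · exact le_of_mul_le_mul_right key h0

end Aux

open MeasureTheory in
/-- the projection onto a nonempty, `L⁰`-convex, sequentially closed and
bounded set is nonexpansive. -/
theorem stmt_16 {Ω : Type*} [MeasurableSpace Ω] (P : Measure Ω) [IsProbabilityMeasure P]
    {d : ℕ} (K : Set (Fin d → L0 P)) (hne : K.Nonempty)
    (hconv : L0.L0Convex P K) (hclosed : L0.SeqClosed P K) (hbdd : L0.Bounded P K)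
    (X₁ X₂ : Fin d → L0 P) (Y₁ Y₂ : Fin d → L0 P) (hY₁ : Y₁ ∈ K) (hY₂ : Y₂ ∈ K)
    (h₁ : ∀ Z ∈ K, L0.inner P (X₁ - Y₁) (Z - Y₁) ≤ 0)
    (h₂ : ∀ Z ∈ K, L0.inner P (X₂ - Y₂) (Z - Y₂) ≤ 0) :
    L0.norm P (Y₁ - Y₂) ≤ L0.norm P (X₁ - X₂) := by
  have hA := h₁ Y₂ hY₂
  have hB := h₂ Y₁ hY₁
  rw [← AEEqFun.coeFn_le] at hA hB ⊢
  have hz : ⇑(0 : Ω →ₘ[P] ℝ) =ᵐ[P] 0 := AEEqFun.coeFn_zero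
  filter_upwards [hA, hB, hz, coeFn_inner_sub X₁ Y₁ Y₂ Y₁, coeFn_inner_sub X₂ Y₂ Y₁ Y₂,
    coeFn_norm_sub Y₁ Y₂, coeFn_norm_sub X₁ X₂] with ω hA hB hz e1 e2 n1 n2
  rw [hz] at hA hB
  rw [e1] at hA
  rw [e2] at hB
  rw [n1, n2]
  set a : Fin d → ℝ := fun k => Y₁ k ω - Y₂ k ω with ha
  set b : Fin d → ℝ := fun k => X₁ k ω - X₂ k ω with hb
  apply sqrt_step
  have hsum : ∑ k, (a k ^ 2 - b k * a k) ≤ 0 := by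
    have heq : ∑ k, (a k ^ 2 - b k * a k) =
        (∑ k, (X₁ k ω - Y₁ k ω) * (Y₂ k ω - Y₁ k ω)) +
        ∑ k, (X₂ k ω - Y₂ k ω) * (Y₁ k ω - Y₂ k ω) := by
      rw [← Finset.sum_add_distrib]
      refine Finset.sum_congr rfl fun k _ => ?_
      simp only [ha, hb]
      ring
    rw [heq]
    exact add_nonpos hA hB
  rw [Finset.sum_sub_distrib] at hsum
  linarith
end

section
/- (Intermediate value theorem in L⁰) Let X, X̄ ∈ L⁰ with X ≤ X̄ P-a.s. and let [X, X̄] = {Z ∈ L⁰ : X ≤ Z ≤ X̄}. Let f : [X, X̄] → L⁰ be a local, sequentially continuous function and set A = {f(X) ≤ f(X̄)} ∈ 𝒜. Then for every Y ∈ [1_A f(X) + 1_{A^c} f(X̄), 1_A f(X̄) + 1_{A^c} f(X)] there exists Ȳ ∈ [X, X̄] with f(Ȳ) = Y. -/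
open MeasureTheory Filter

namespace StmtAux

open MeasureTheory Filter L0
open scoped Classical

variable {Ω : Type*} [MeasurableSpace Ω] (P : Measure Ω)

lemma ind_coeFn {B : Set Ω} (hB : MeasurableSet B) :
    ⇑(L0.ind P B) =ᵐ[P] B.indicator (fun _ => (1:ℝ)) := by
  simp only [L0.ind, dif_pos hB]
  exact AEEqFun.coeFn_mk _ _

/-- `glue P B L M` equals `M` on `B` and `L` off `B`. -/
noncomputable def glue (B : Set Ω) (L M : L0 P) : L0 P :=
  L0.ind P B * M + L0.ind P Bᶜ * L

lemma glue_ae {B : Set Ω} (hB : MeasurableSet B) (L M : L0 P) :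
    ∀ᵐ ω ∂P, glue P B L M ω = if ω ∈ B then M ω else L ω := by
  filter_upwards [AEEqFun.coeFn_add (L0.ind P B * M) (L0.ind P Bᶜ * L),
    AEEqFun.coeFn_mul (L0.ind P B) M, AEEqFun.coeFn_mul (L0.ind P Bᶜ) L,
    ind_coeFn P hB, ind_coeFn P hB.compl] with ω h1 h2 h3 h4 h5
  show (⇑(L0.ind P B * M + L0.ind P Bᶜ * L)) ω = _
  rw [h1]
  simp only [Pi.add_apply, h2, h3, Pi.mul_apply, h4, h5]
  by_cases hω : ω ∈ B <;>
    simp [Set.indicator_of_mem, Set.indicator_of_notMem, hω]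

lemma ae_of_ind_mul_eq {S : Set Ω} (hS : MeasurableSet S) {Z W : L0 P}
    (h : L0.ind P S * Z = L0.ind P S * W) : ∀ᵐ ω ∂P, ω ∈ S → Z ω = W ω := by
  have h2 : ⇑(L0.ind P S * Z) =ᵐ[P] ⇑(L0.ind P S * W) := by rw [h]
  filter_upwards [h2, AEEqFun.coeFn_mul (L0.ind P S) Z, AEEqFun.coeFn_mul (L0.ind P S) W,
    ind_coeFn P hS] with ω h1 h2 h3 h4 hω
  rw [h2, h3, Pi.mul_apply, Pi.mul_apply, h4, Set.indicator_of_mem hω, one_mul, one_mul] at h1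
  exact h1

lemma ind_mul_eq_of_ae {S : Set Ω} (hS : MeasurableSet S) {Z W : L0 P}
    (h : ∀ᵐ ω ∂P, ω ∈ S → Z ω = W ω) : L0.ind P S * Z = L0.ind P S * W := by
  apply AEEqFun.ext
  filter_upwards [AEEqFun.coeFn_mul (L0.ind P S) Z, AEEqFun.coeFn_mul (L0.ind P S) W,
    ind_coeFn P hS, h] with ω h1 h2 h3 h4
  rw [h1, h2]
  simp only [Pi.mul_apply, h3]
  by_cases hω : ω ∈ S
  · simp [Set.indicator_of_mem hω, h4 hω]
  · simp [Set.indicator_of_notMem hω]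

variable {X Xb : L0 P}

lemma glue_mem {B : Set Ω} (hB : MeasurableSet B) {L M : L0 P}
    (hL : X ≤ L ∧ L ≤ Xb) (hM : X ≤ M ∧ M ≤ Xb) :
    X ≤ glue P B L M ∧ glue P B L M ≤ Xb := by
  constructor
  · rw [← AEEqFun.coeFn_le]
    filter_upwards [glue_ae P hB L M, AEEqFun.coeFn_le.2 hL.1, AEEqFun.coeFn_le.2 hM.1]
      with ω h1 h2 h3
    rw [h1]; split <;> assumption
  · rw [← AEEqFun.coeFn_le]
    filter_upwards [glue_ae P hB L M, AEEqFun.coeFn_le.2 hL.2, AEEqFun.coeFn_le.2 hM.2]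
      with ω h1 h2 h3
    rw [h1]; split <;> assumption

variable [IsProbabilityMeasure P]

lemma f_glue_ae (f : L0 P → L0 P)
    (hfloc : L0.IsLocal1 P {Z | X ≤ Z ∧ Z ≤ Xb} f)
    {B : Set Ω} (hB : MeasurableSet B) {L M : L0 P}
    (hL : X ≤ L ∧ L ≤ Xb) (hM : X ≤ M ∧ M ≤ Xb) :
    ∀ᵐ ω ∂P, f (glue P B L M) ω = if ω ∈ B then f M ω else f L ω := by
  set A : ℕ → Set Ω := fun n => if n = 0 then B else if n = 1 then Bᶜ else ∅ with hA
  set Xi : ℕ → L0 P := fun n => if n = 0 then M else L with hXi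
  have hpart : L0.IsPartition P A := by
    refine ⟨fun i => ?_, fun i j hij => ?_, ?_⟩
    · rcases i with _ | _ | i <;> simp [hA, hB, hB.compl]
    · have hA0 : A 0 = B := rfl
      have hA1 : A 1 = Bᶜ := rfl
      have hA2 : ∀ j, A (j+2) = ∅ := fun j => rfl
      rcases i with _ | _ | i <;> rcases j with _ | _ | j <;>
        simp_all [hA0, hA1, hA2, Set.inter_comm]
    · have : B ⊆ ⋃ i, A i := Set.subset_iUnion A 0
      have h2 : Bᶜ ⊆ ⋃ i, A i := Set.subset_iUnion A 1
      have : (⋃ i, A i) = Set.univ := by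
        apply Set.eq_univ_of_univ_subset
        intro ω _
        by_cases hω : ω ∈ B
        · exact this hω
        · exact h2 hω
      rw [this]; simp
  have hmem : ∀ i, Xi i ∈ {Z | X ≤ Z ∧ Z ≤ Xb} := by
    intro i; rcases i with _ | i <;> simpa [hXi] using (by assumption)
  have hGmem : glue P B L M ∈ {Z | X ≤ Z ∧ Z ≤ Xb} := glue_mem P hB hL hM
  have hglue : L0.IsGluing1 P A Xi (glue P B L M) := by
    intro i
    rcases i with _ | _ | i
    · refine ind_mul_eq_of_ae P hB ?_
      filter_upwards [glue_ae P hB L M] with ω h1 hω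
      simp [h1, hω, hXi]
    · refine ind_mul_eq_of_ae P hB.compl ?_
      filter_upwards [glue_ae P hB L M] with ω h1 hω
      simp only [Set.mem_compl_iff] at hω
      simp [h1, hω, hXi]
    · have he : (∅ : Set Ω).indicator (fun _ => (1:ℝ)) = fun _ => 0 := by simp
      refine ind_mul_eq_of_ae P MeasurableSet.empty ?_
      filter_upwards with ω hω
      exact absurd hω (Set.notMem_empty ω)
  have hres := hfloc A Xi (glue P B L M) hpart hmem hGmem hglue
  have h0 := ae_of_ind_mul_eq P hB (hres 0)
  have h1 := ae_of_ind_mul_eq P hB.compl (hres 1)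
  filter_upwards [h0, h1] with ω h0 h1
  by_cases hω : ω ∈ B
  · simpa [hω, hXi] using h0 hω
  · simpa [hω, hXi] using h1 (by simpa using hω)

section Main

variable (A : Set Ω) (f : L0 P → L0 P) (Y : L0 P)

/-- Midpoint of a pair. -/
noncomputable def mid (p : L0 P × L0 P) : L0 P := (2:ℝ)⁻¹ • (p.1 + p.2)

lemma mid_ae (p : L0 P × L0 P) :
    ∀ᵐ ω ∂P, mid P p ω = 2⁻¹ * (p.1 ω + p.2 ω) := by
  filter_upwards [AEEqFun.coeFn_smul (2:ℝ)⁻¹ (p.1 + p.2), AEEqFun.coeFn_add p.1 p.2]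
    with ω h1 h2
  show (⇑((2:ℝ)⁻¹ • (p.1 + p.2))) ω = _
  rw [h1]
  simp [h2]

lemma mid_mem {X Xb : L0 P} {p : L0 P × L0 P}
    (h1 : X ≤ p.1 ∧ p.1 ≤ Xb) (h2 : X ≤ p.2 ∧ p.2 ≤ Xb) :
    X ≤ mid P p ∧ mid P p ≤ Xb := by
  constructor
  · rw [← AEEqFun.coeFn_le]
    filter_upwards [mid_ae P p, AEEqFun.coeFn_le.2 h1.1, AEEqFun.coeFn_le.2 h2.1]
      with ω hm a b
    rw [hm]; linarith
  · rw [← AEEqFun.coeFn_le]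
    filter_upwards [mid_ae P p, AEEqFun.coeFn_le.2 h1.2, AEEqFun.coeFn_le.2 h2.2]
      with ω hm a b
    rw [hm]; linarith

/-- The bisection set: where the value at the midpoint is on the "lower" side. -/
def Bset (p : L0 P × L0 P) : Set Ω :=
  (A ∩ {ω | f (mid P p) ω ≤ Y ω}) ∪ (Aᶜ ∩ {ω | Y ω ≤ f (mid P p) ω})

lemma Bset_meas (hA : MeasurableSet A) (p : L0 P × L0 P) :
    MeasurableSet (Bset P A f Y p) :=
  (hA.inter (measurableSet_le (f (mid P p)).measurable Y.measurable)).union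
    (hA.compl.inter (measurableSet_le Y.measurable (f (mid P p)).measurable))

lemma mem_Bset {p : L0 P × L0 P} {ω : Ω} :
    ω ∈ Bset P A f Y p ↔
      ((ω ∈ A ∧ f (mid P p) ω ≤ Y ω) ∨ (ω ∉ A ∧ Y ω ≤ f (mid P p) ω)) := by
  simp [Bset]

/-- One bisection step. -/
noncomputable def step (p : L0 P × L0 P) : L0 P × L0 P :=
  (glue P (Bset P A f Y p) p.1 (mid P p), glue P (Bset P A f Y p)ᶜ p.2 (mid P p))

/-- The bisection sequence. -/
noncomputable def seq (X Xb : L0 P) (n : ℕ) : L0 P × L0 P :=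
  (step P A f Y)^[n] (X, Xb)

lemma seq_succ (X Xb : L0 P) (n : ℕ) :
    seq P A f Y X Xb (n + 1) = step P A f Y (seq P A f Y X Xb n) :=
  Function.iterate_succ_apply' _ _ _

end Main

end StmtAux


open MeasureTheory in
/-- intermediate value theorem in `L⁰`. -/
theorem stmt_19 {Ω : Type*} [MeasurableSpace Ω] (P : Measure Ω) [IsProbabilityMeasure P]
    (X Xb : L0 P) (hXXb : X ≤ Xb)
    (f : L0 P → L0 P)
    (hfloc : L0.IsLocal1 P {Z | X ≤ Z ∧ Z ≤ Xb} f)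
    (hfc : L0.SeqContinuous1 P {Z | X ≤ Z ∧ Z ≤ Xb} f)
    (A : Set Ω) (hA : MeasurableSet A)
    (hAdef : ∀ᵐ ω ∂P, ω ∈ A ↔ f X ω ≤ f Xb ω)
    (Y : L0 P)
    (hYl : ∀ᵐ ω ∂P, A.indicator (⇑(f X)) ω + Aᶜ.indicator (⇑(f Xb)) ω ≤ Y ω)
    (hYu : ∀ᵐ ω ∂P, Y ω ≤ A.indicator (⇑(f Xb)) ω + Aᶜ.indicator (⇑(f X)) ω) :
    ∃ Yb : L0 P, (X ≤ Yb ∧ Yb ≤ Xb) ∧ f Yb = Y := by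
  
  classical
  have hXXb' := AEEqFun.coeFn_le.2 hXXb
  set σ : ℕ → L0 P × L0 P := StmtAux.seq P A f Y X Xb with hσ
  have key : ∀ n : ℕ,
      ((X ≤ (σ n).1 ∧ (σ n).1 ≤ Xb) ∧ (X ≤ (σ n).2 ∧ (σ n).2 ≤ Xb)) ∧
      ∀ᵐ ω ∂P,
        ((σ n).1 ω ≤ (σ n).2 ω ∧
          (σ n).2 ω - (σ n).1 ω = (2:ℝ)⁻¹ ^ n * (Xb ω - X ω)) ∧
        (ω ∈ A → f ((σ n).1) ω ≤ Y ω ∧ Y ω ≤ f ((σ n).2) ω) ∧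
        (ω ∉ A → f ((σ n).2) ω ≤ Y ω ∧ Y ω ≤ f ((σ n).1) ω) := by
    intro n
    induction n with
    | zero =>
      have h0 : σ 0 = (X, Xb) := rfl
      rw [h0]
      refine ⟨⟨⟨le_refl X, hXXb⟩, ⟨hXXb, le_refl Xb⟩⟩, ?_⟩
      filter_upwards [hXXb', hYl, hYu] with ω h1 h2 h3
      refine ⟨⟨h1, by simp⟩, fun hω => ?_, fun hω => ?_⟩
      · rw [Set.indicator_of_mem hω, Set.indicator_of_notMem (by simpa using hω),
          add_zero] at h2 h3
        exact ⟨h2, h3⟩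
      · rw [Set.indicator_of_notMem hω, Set.indicator_of_mem (by simpa using hω),
          zero_add] at h2 h3
        exact ⟨h2, h3⟩
    | succ n ih =>
      obtain ⟨⟨hLC, hUC⟩, hae⟩ := ih
      have hMC := StmtAux.mid_mem P hLC hUC
      have hBm : MeasurableSet (StmtAux.Bset P A f Y (σ n)) := StmtAux.Bset_meas P A f Y hA _
      have hs1 : (σ (n+1)).1 =
          StmtAux.glue P (StmtAux.Bset P A f Y (σ n)) (σ n).1 (StmtAux.mid P (σ n)) := by
        rw [hσ, StmtAux.seq_succ]; rfl
      have hs2 : (σ (n+1)).2 =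
          StmtAux.glue P (StmtAux.Bset P A f Y (σ n))ᶜ (σ n).2 (StmtAux.mid P (σ n)) := by
        rw [hσ, StmtAux.seq_succ]; rfl
      rw [hs1, hs2]
      refine ⟨⟨StmtAux.glue_mem P hBm hLC hMC, StmtAux.glue_mem P hBm.compl hUC hMC⟩, ?_⟩
      filter_upwards [hae, StmtAux.glue_ae P hBm (σ n).1 (StmtAux.mid P (σ n)),
        StmtAux.glue_ae P hBm.compl (σ n).2 (StmtAux.mid P (σ n)),
        StmtAux.f_glue_ae P f hfloc hBm hLC hMC,
        StmtAux.f_glue_ae P f hfloc hBm.compl hUC hMC,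
        StmtAux.mid_ae P (σ n)] with ω hk hg1 hg2 hf1 hf2 hm
      obtain ⟨⟨hLU, hdiff⟩, hfA, hfAc⟩ := hk
      have hpow : (2:ℝ)⁻¹ ^ (n+1) * (Xb ω - X ω)
          = 2⁻¹ * ((2:ℝ)⁻¹ ^ n * (Xb ω - X ω)) := by ring
      by_cases hB : ω ∈ StmtAux.Bset P A f Y (σ n)
      · have hBc : ω ∉ (StmtAux.Bset P A f Y (σ n))ᶜ := by simpa using hB
        rw [hg1, hg2, hf1, hf2, if_pos hB, if_pos hB, if_neg hBc, if_neg hBc]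
        refine ⟨⟨by rw [hm]; linarith, by rw [hpow, ← hdiff, hm]; ring⟩,
          fun hω => ?_, fun hω => ?_⟩
        · rcases (StmtAux.mem_Bset P A f Y).1 hB with ⟨_, h⟩ | ⟨hna, _⟩
          · exact ⟨h, (hfA hω).2⟩
          · exact absurd hω hna
        · rcases (StmtAux.mem_Bset P A f Y).1 hB with ⟨ha, _⟩ | ⟨_, h⟩
          · exact absurd ha hω
          · exact ⟨(hfAc hω).1, h⟩
      · have hBc : ω ∈ (StmtAux.Bset P A f Y (σ n))ᶜ := by simpa using hB
        rw [hg1, hg2, hf1, hf2, if_neg hB, if_neg hB, if_pos hBc, if_pos hBc]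
        refine ⟨⟨by rw [hm]; linarith, by rw [hpow, ← hdiff, hm]; ring⟩,
          fun hω => ?_, fun hω => ?_⟩
        · have h : ¬ f (StmtAux.mid P (σ n)) ω ≤ Y ω := fun h =>
            hB ((StmtAux.mem_Bset P A f Y).2 (Or.inl ⟨hω, h⟩))
          exact ⟨(hfA hω).1, le_of_not_ge h⟩
        · have h : ¬ Y ω ≤ f (StmtAux.mid P (σ n)) ω := fun h =>
            hB ((StmtAux.mem_Bset P A f Y).2 (Or.inr ⟨hω, h⟩))
          exact ⟨le_of_not_ge h, (hfAc hω).2⟩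
  have stepRel : ∀ n, ∀ᵐ ω ∂P, (σ n).1 ω ≤ (σ (n+1)).1 ω ∧ (σ (n+1)).2 ω ≤ (σ n).2 ω := by
    intro n
    have hBm : MeasurableSet (StmtAux.Bset P A f Y (σ n)) := StmtAux.Bset_meas P A f Y hA _
    have hs1 : (σ (n+1)).1 =
        StmtAux.glue P (StmtAux.Bset P A f Y (σ n)) (σ n).1 (StmtAux.mid P (σ n)) := by
      rw [hσ, StmtAux.seq_succ]; rfl
    have hs2 : (σ (n+1)).2 =
        StmtAux.glue P (StmtAux.Bset P A f Y (σ n))ᶜ (σ n).2 (StmtAux.mid P (σ n)) := by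
      rw [hσ, StmtAux.seq_succ]; rfl
    rw [hs1, hs2]
    filter_upwards [(key n).2, StmtAux.glue_ae P hBm (σ n).1 (StmtAux.mid P (σ n)),
      StmtAux.glue_ae P hBm.compl (σ n).2 (StmtAux.mid P (σ n)),
      StmtAux.mid_ae P (σ n)] with ω hk hg1 hg2 hm
    have hLU := hk.1.1
    by_cases hB : ω ∈ StmtAux.Bset P A f Y (σ n)
    · have hBc : ω ∉ (StmtAux.Bset P A f Y (σ n))ᶜ := by simpa using hB
      rw [hg1, hg2, if_pos hB, if_neg hBc, hm]
      constructor <;> linarith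
    · have hBc : ω ∈ (StmtAux.Bset P A f Y (σ n))ᶜ := by simpa using hB
      rw [hg1, hg2, if_neg hB, if_pos hBc, hm]
      constructor <;> linarith
  have keyAll : ∀ᵐ ω ∂P, ∀ n,
      (((σ n).1 ω ≤ (σ n).2 ω ∧
          (σ n).2 ω - (σ n).1 ω = (2:ℝ)⁻¹ ^ n * (Xb ω - X ω)) ∧
        (ω ∈ A → f ((σ n).1) ω ≤ Y ω ∧ Y ω ≤ f ((σ n).2) ω) ∧
        (ω ∉ A → f ((σ n).2) ω ≤ Y ω ∧ Y ω ≤ f ((σ n).1) ω)) :=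
    ae_all_iff.2 fun n => (key n).2
  have stepAll : ∀ᵐ ω ∂P, ∀ n,
      (σ n).1 ω ≤ (σ (n+1)).1 ω ∧ (σ (n+1)).2 ω ≤ (σ n).2 ω := ae_all_iff.2 stepRel
  have bndAll : ∀ᵐ ω ∂P, ∀ n, X ω ≤ (σ n).1 ω ∧ (σ n).2 ω ≤ Xb ω :=
    ae_all_iff.2 fun n => by
      filter_upwards [AEEqFun.coeFn_le.2 (key n).1.1.1, AEEqFun.coeFn_le.2 (key n).1.2.2]
        with ω h1 h2
      exact ⟨h1, h2⟩
  have hconv : ∀ᵐ ω ∂P, ∃ l : ℝ, Tendsto (fun n => (σ n).1 ω) atTop (nhds l) := by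
    filter_upwards [stepAll, bndAll, keyAll] with ω hstep hbnd hk
    have hmono : Monotone fun n => (σ n).1 ω := monotone_nat_of_le_succ fun n => (hstep n).1
    have hbdd : BddAbove (Set.range fun n => (σ n).1 ω) :=
      ⟨Xb ω, by rintro _ ⟨n, rfl⟩; exact le_trans (hk n).1.1 (hbnd n).2⟩
    exact ⟨_, tendsto_atTop_ciSup hmono hbdd⟩
  obtain ⟨h, hhm, hht⟩ := exists_stronglyMeasurable_limit_of_tendsto_ae
    (fun n => ((σ n).1).aestronglyMeasurable) hconv
  set Yb : L0 P := AEEqFun.mk h hhm.aestronglyMeasurable with hYbdef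
  have hYbcoe : ⇑Yb =ᵐ[P] h := AEEqFun.coeFn_mk _ _
  have hLt : ∀ᵐ ω ∂P, Tendsto (fun n => (σ n).1 ω) atTop (nhds (Yb ω)) := by
    filter_upwards [hht, hYbcoe] with ω h1 h2
    rw [h2]; exact h1
  have hUt : ∀ᵐ ω ∂P, Tendsto (fun n => (σ n).2 ω) atTop (nhds (Yb ω)) := by
    filter_upwards [hLt, keyAll] with ω h1 hk
    have h2 : Tendsto (fun n => (σ n).1 ω + (2:ℝ)⁻¹ ^ n * (Xb ω - X ω)) atTop
        (nhds (Yb ω + 0)) :=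
      h1.add (by
        simpa using (tendsto_pow_atTop_nhds_zero_of_lt_one (by norm_num) (by
          norm_num : (2:ℝ)⁻¹ < 1)).mul_const (Xb ω - X ω))
    rw [add_zero] at h2
    exact h2.congr fun n => by linarith [(hk n).1.2]
  have hYbC : X ≤ Yb ∧ Yb ≤ Xb := by
    constructor
    · rw [← AEEqFun.coeFn_le]
      filter_upwards [hLt, bndAll] with ω h1 h2
      exact ge_of_tendsto' h1 fun n => (h2 n).1
    · rw [← AEEqFun.coeFn_le]
      filter_upwards [hUt, bndAll] with ω h1 h2
      exact le_of_tendsto' h1 fun n => (h2 n).2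
  have hfL := hfc (fun n => (σ n).1) Yb (fun n => (key n).1.1) hYbC hLt
  have hfU := hfc (fun n => (σ n).2) Yb (fun n => (key n).1.2) hYbC hUt
  refine ⟨Yb, hYbC, ?_⟩
  apply AEEqFun.ext
  filter_upwards [hfL, hfU, keyAll] with ω h1 h2 hk
  by_cases hω : ω ∈ A
  · exact le_antisymm (le_of_tendsto h1 (Eventually.of_forall fun n => ((hk n).2.1 hω).1))
      (ge_of_tendsto h2 (Eventually.of_forall fun n => ((hk n).2.1 hω).2))
  · exact le_antisymm (le_of_tendsto h2 (Eventually.of_forall fun n => ((hk n).2.2 hω).1))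
      (ge_of_tendsto h1 (Eventually.of_forall fun n => ((hk n).2.2 hω).2))
end
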